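/- arXiv:2205.08115 — 3 statements merged into one kernel-verified Lean document; each statement's English description precedes it below -/
import Mathlib

section
/- Suppose there exist τ > 0 and ε > 0 such that for all π in the polyhedral set C₁ ∩ C₂ with ||π - proj_{C₁∩C₂}(π + D_X π D_Y)|| ≤ ε, one has dist(π, 𝒳) ≤ τ ||π - proj_{C₁∩C₂}(π + D_X π D_Y)||. Then the same type of bound extends to all π ∈ R^{n×m} (with residual small enough) with the enlarged constant τ' = τ σ_max(D_X) σ_max(D_Y) + 2τ + 1, where σ_max denotes the largest singular value. -/
open scoped RealInnerProductSpace

/-- Extension of the Luo–Tseng error bound from the feasible set `C = C₁ ∩ C₂` to the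
whole space, with the enlarged constant `τ σ_max(D_X) σ_max(D_Y) + 2τ + 1`.
Here `A` is the linear map `π ↦ D_X π D_Y` (with operator norm at most `sX * sY`,
the product of the largest singular values), `proj` is the Euclidean projection
onto `C`, and `X` is the critical point set of the GW problem. -/
theorem luo_tseng_error_bound_extension
    {E : Type*} [NormedAddCommGroup E] [InnerProductSpace ℝ E] [FiniteDimensional ℝ E]
    (C X : Set E) (hne : C.Nonempty) (hcl : IsClosed C) (hconv : Convex ℝ C)
    (proj : E → E)
    (hmem : ∀ x, proj x ∈ C)
    (hnearest : ∀ x, ∀ y ∈ C, ‖x - proj x‖ ≤ ‖x - y‖)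
    (A : E →ₗ[ℝ] E) (sX sY : ℝ) (hsX : 0 ≤ sX) (hsY : 0 ≤ sY)
    (hA : ∀ x : E, ‖A x‖ ≤ sX * sY * ‖x‖)
    (τ ε : ℝ) (hτ : 0 < τ) (hε : 0 < ε)
    (hEB : ∀ π ∈ C, ‖π - proj (π + A π)‖ ≤ ε →
      Metric.infDist π X ≤ τ * ‖π - proj (π + A π)‖) :
    ∃ ε' > 0, ∀ π : E, ‖π - proj (π + A π)‖ ≤ ε' →
      Metric.infDist π X ≤ (τ * sX * sY + 2 * τ + 1) * ‖π - proj (π + A π)‖ := by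
  classical
  -- variational inequality for the projection
  have hC : ∀ x : E, ∀ c ∈ C, ⟪x - proj x, c - proj x⟫ ≤ 0 := by
    intro x c hc
    have hinf : ‖x - proj x‖ = ⨅ w : C, ‖x - w‖ := by
      haveI : Nonempty C := hne.to_subtype
      refine le_antisymm (le_ciInf fun w => hnearest x w w.2) ?_
      have hbdd : BddBelow (Set.range fun w : C => ‖x - (w : E)‖) :=
        ⟨0, Set.forall_mem_range.mpr fun w => norm_nonneg _⟩
      exact ciInf_le hbdd ⟨proj x, hmem x⟩
    exact (norm_eq_iInf_iff_real_inner_le_zero hconv (hmem x)).mp hinf c hc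
  -- nonexpansiveness of the projection
  have nonexp : ∀ x y : E, ‖proj x - proj y‖ ≤ ‖x - y‖ := by
    intro x y
    have h1 : 0 ≤ ⟪x - proj x, proj x - proj y⟫ := by
      have := hC x (proj y) (hmem y)
      have h := inner_neg_right (𝕜 := ℝ) (x - proj x) (proj y - proj x)
      simp only [neg_sub] at h
      linarith [this, h ▸ (neg_nonneg.mpr this)]
    have h2 : ⟪y - proj y, proj x - proj y⟫ ≤ 0 := hC y (proj x) (hmem x)
    have key : ‖proj x - proj y‖ ^ 2 ≤ ⟪x - y, proj x - proj y⟫ := by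
      have expand : ⟪proj x - proj y, proj x - proj y⟫ =
          ⟪x - y, proj x - proj y⟫ - ⟪x - proj x, proj x - proj y⟫
            + ⟪y - proj y, proj x - proj y⟫ := by
        rw [← inner_sub_left, ← inner_add_left]
        congr 1
        abel
      rw [← real_inner_self_eq_norm_sq]
      linarith [expand]
    have h3 : ⟪x - y, proj x - proj y⟫ ≤ ‖x - y‖ * ‖proj x - proj y‖ :=
      real_inner_le_norm _ _
    by_cases hz : ‖proj x - proj y‖ = 0
    · rw [hz]; exact norm_nonneg _
    · have hpos : 0 < ‖proj x - proj y‖ := lt_of_le_of_ne (norm_nonneg _) (Ne.symm hz)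
      nlinarith
  -- the projection moves a point closer to every point of C
  have closer : ∀ x : E, ∀ c ∈ C, ‖proj x - c‖ ≤ ‖x - c‖ := by
    intro x c hc
    have h1 : 0 ≤ ⟪x - proj x, proj x - c⟫ := by
      have := hC x c hc
      have h := inner_neg_right (𝕜 := ℝ) (x - proj x) (c - proj x)
      simp only [neg_sub] at h
      linarith [this, h ▸ (neg_nonneg.mpr this)]
    have key : ‖proj x - c‖ ^ 2 ≤ ⟪x - c, proj x - c⟫ := by
      have expand : ⟪proj x - c, proj x - c⟫ =
          ⟪x - c, proj x - c⟫ - ⟪x - proj x, proj x - c⟫ := by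
        rw [← inner_sub_left]
        congr 1
        abel
      rw [← real_inner_self_eq_norm_sq]
      linarith [expand]
    have h3 : ⟪x - c, proj x - c⟫ ≤ ‖x - c‖ * ‖proj x - c‖ := real_inner_le_norm _ _
    by_cases hz : ‖proj x - c‖ = 0
    · rw [hz]; exact norm_nonneg _
    · have hpos : 0 < ‖proj x - c‖ := lt_of_le_of_ne (norm_nonneg _) (Ne.symm hz)
      nlinarith
  have hs : (0:ℝ) < 2 + sX * sY := by nlinarith
  refine ⟨ε / (2 + sX * sY), div_pos hε hs, ?_⟩
  intro π hr
  set c := proj (π + A π) with hc_def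
  set r := ‖π - c‖ with hr_def
  have hr0 : 0 ≤ r := norm_nonneg _
  set πh := proj π with hπh
  -- ‖π - πh‖ ≤ r
  have h1 : ‖π - πh‖ ≤ r := hnearest π c (hmem _)
  -- ‖πh - c‖ ≤ r
  have h2 : ‖πh - c‖ ≤ r := closer π c (hmem _)
  -- residual of πh
  have h3 : ‖c - proj (πh + A πh)‖ ≤ (1 + sX * sY) * r := by
    have hne' : ‖c - proj (πh + A πh)‖ ≤ ‖(π + A π) - (πh + A πh)‖ := nonexp _ _
    have heq : (π + A π) - (πh + A πh) = (π - πh) + A (π - πh) := by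
      rw [map_sub]; abel
    calc ‖c - proj (πh + A πh)‖ ≤ ‖(π - πh) + A (π - πh)‖ := by rw [heq] at hne'; exact hne'
      _ ≤ ‖π - πh‖ + ‖A (π - πh)‖ := norm_add_le _ _
      _ ≤ ‖π - πh‖ + sX * sY * ‖π - πh‖ := by linarith [hA (π - πh)]
      _ ≤ (1 + sX * sY) * r := by nlinarith [h1, mul_nonneg hsX hsY, norm_nonneg (π - πh)]
  have hres : ‖πh - proj (πh + A πh)‖ ≤ (2 + sX * sY) * r := by
    calc ‖πh - proj (πh + A πh)‖ ≤ ‖πh - c‖ + ‖c - proj (πh + A πh)‖ := by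
          have := norm_add_le (πh - c) (c - proj (πh + A πh))
          simpa using this
      _ ≤ r + (1 + sX * sY) * r := by linarith
      _ = (2 + sX * sY) * r := by ring
  have hsmall : ‖πh - proj (πh + A πh)‖ ≤ ε := by
    have h4 : (2 + sX * sY) * r ≤ (2 + sX * sY) * (ε / (2 + sX * sY)) :=
      mul_le_mul_of_nonneg_left hr hs.le
    rw [mul_div_cancel₀ _ hs.ne'] at h4
    linarith
  have hEBres : Metric.infDist πh X ≤ τ * ‖πh - proj (πh + A πh)‖ :=
    hEB πh (hmem π) hsmall
  have htri : Metric.infDist π X ≤ Metric.infDist πh X + dist π πh :=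
    Metric.infDist_le_infDist_add_dist
  have hdist : dist π πh = ‖π - πh‖ := dist_eq_norm _ _
  have hτr : τ * ‖πh - proj (πh + A πh)‖ ≤ τ * ((2 + sX * sY) * r) :=
    mul_le_mul_of_nonneg_left hres (le_of_lt hτ)
  calc Metric.infDist π X ≤ Metric.infDist πh X + dist π πh := htri
    _ ≤ τ * ((2 + sX * sY) * r) + r := by rw [hdist]; linarith
    _ = (τ * sX * sY + 2 * τ + 1) * r := by ring
end

section
/- Sufficient decrease of BAPG: Let {(πᵏ, wᵏ)} be generated by the BAPG updates πᵏ⁺¹ = argmin_{π∈C₁} {f(π, wᵏ) + ρ D_h(π, wᵏ)} and wᵏ⁺¹ = argmin_{w∈C₂} {f(πᵏ⁺¹, w) + ρ D_h(w, πᵏ⁺¹)}, where f(π, w) = -Tr(D_X π D_Y wᵀ) is bilinear and D_h is symmetric along the sequence. Then the potential F_ρ(π, w) = f(π, w) + 1_{C₁}(π) + 1_{C₂}(w) + ρ D_h(π, w) satisfies F_ρ(πᵏ⁺¹, wᵏ⁺¹) - F_ρ(πᵏ, wᵏ) ≤ -ρ D_h(πᵏ, πᵏ⁺¹) - ρ D_h(wᵏ,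 wᵏ⁺¹). -/
open scoped RealInnerProductSpace

open Filter Set Topology

lemma min_deriv_nonneg' {E : Type*} [NormedAddCommGroup E] [NormedSpace ℝ E]
    {C : Set E} (hC : Convex ℝ C) (φ : E → ℝ) {x z : E} (hx : x ∈ C) (hz : z ∈ C)
    (hmin : ∀ u ∈ C, φ x ≤ φ u) {m : ℝ}
    (hd : HasDerivAt (fun t : ℝ => φ (x + t • (z - x))) m 0) : 0 ≤ m := by
  set f : ℝ → ℝ := fun t => φ (x + t • (z - x)) with hf
  have hT : Tendsto (slope f 0) (𝓝[>] (0:ℝ)) (𝓝 m) :=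
    (hasDerivAt_iff_tendsto_slope.mp hd).mono_left
      (nhdsWithin_mono _ (fun t ht => ne_of_gt ht))
  refine ge_of_tendsto hT ?_
  filter_upwards [Ioo_mem_nhdsGT_of_mem (by constructor <;> norm_num : (0:ℝ) ∈ Ico 0 1)]
    with t ht
  have hmem : x + t • (z - x) ∈ C := by
    have := hC hx hz (by linarith [ht.1, ht.2] : (0:ℝ) ≤ 1 - t) (le_of_lt ht.1) (by ring)
    convert this using 1
    module
  have h0 : f 0 = φ x := by simp [hf]
  have hge : f 0 ≤ f t := by rw [h0]; exact hmin _ hmem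
  have : slope f 0 t = (f t - f 0) / t := by simp [slope_def_field]
  rw [this]
  exact div_nonneg (by linarith) (le_of_lt ht.1)

lemma bregman_prox_ineq {E : Type*} [NormedAddCommGroup E] [InnerProductSpace ℝ E] [CompleteSpace E]
    {C : Set E} (hC : Convex ℝ C) (L : E →ₗ[ℝ] ℝ)
    (h : E → ℝ) (h' : E → E)
    (hdiff : ∀ x, HasGradientAt h (h' x) x)
    (Dh : E → E → ℝ)
    (hDh : ∀ x y, Dh x y = h x - h y - ⟪h' y, x - y⟫)
    {ρ : ℝ} (hρ : 0 < ρ) {x z p : E} (hx : x ∈ C) (hz : z ∈ C)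
    (hmin : ∀ u ∈ C, L x + ρ * Dh x p ≤ L u + ρ * Dh u p) :
    L x + ρ * Dh x p ≤ L z + ρ * Dh z p - ρ * Dh z x := by
  set d : E := z - x with hd
  -- derivative of the line restriction
  have hline : HasDerivAt (fun t : ℝ => x + t • d) d 0 := by
    simpa using ((hasDerivAt_id (0:ℝ)).smul_const d).const_add x
  have hgrad : HasFDerivAt h (InnerProductSpace.toDual ℝ E (h' (x + (0:ℝ) • d))) (x + (0:ℝ) • d) :=
    (hdiff _).hasFDerivAt
  have hh : HasDerivAt (fun t : ℝ => h (x + t • d)) ⟪h' x, d⟫ 0 := by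
    have := hgrad.comp_hasDerivAt 0 hline
    simpa [InnerProductSpace.toDual_apply_apply, Function.comp_def] using this
  have hinner : HasDerivAt (fun t : ℝ => ⟪h' p, x + t • d - p⟫) ⟪h' p, d⟫ 0 := by
    have heq : (fun t : ℝ => ⟪h' p, x + t • d - p⟫)
        = fun t : ℝ => ⟪h' p, x - p⟫ + t * ⟪h' p, d⟫ := by
      funext t
      rw [show x + t • d - p = (x - p) + t • d by abel, inner_add_right, real_inner_smul_right]
    rw [heq]
    simpa using ((hasDerivAt_id (0:ℝ)).mul_const ⟪h' p, d⟫).const_add ⟪h' p, x - p⟫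
  have hB : HasDerivAt (fun t : ℝ => L (x + t • d)) (L d) 0 := by
    have heq : (fun t : ℝ => L (x + t • d)) = fun t : ℝ => L x + t * L d := by
      funext t; simp [map_add, map_smul, smul_eq_mul]
    rw [heq]
    simpa using ((hasDerivAt_id (0:ℝ)).mul_const (L d)).const_add (L x)
  have hf : HasDerivAt (fun t : ℝ => L (x + t • d) + ρ * Dh (x + t • d) p)
      (L d + ρ * (⟪h' x, d⟫ - ⟪h' p, d⟫)) 0 := by
    have heq : (fun t : ℝ => L (x + t • d) + ρ * Dh (x + t • d) p)
        = fun t : ℝ => L (x + t • d) + ρ * (h (x + t • d) - h p - ⟪h' p, x + t • d - p⟫) := by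
      funext t; rw [hDh]
    rw [heq]
    exact hB.add (((hh.sub_const (h p)).sub hinner).const_mul ρ)
  have hVI : 0 ≤ L d + ρ * (⟪h' x, d⟫ - ⟪h' p, d⟫) :=
    min_deriv_nonneg' hC (fun u => L u + ρ * Dh u p) hx hz hmin hf
  -- three point identity
  have h3 : ⟪h' x, d⟫ - ⟪h' p, d⟫ = Dh z p - Dh z x - Dh x p := by
    simp only [hDh, hd, inner_sub_right]
    ring
  have hLd : L d = L z - L x := by rw [hd, map_sub]
  rw [h3, hLd] at hVI
  nlinarith [hVI]

/-- Sufficient decrease of BAPG: for the bilinear coupling `f(π, w) = B π w`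
(`f(π, w) = -Tr(D_X π D_Y wᵀ)`) and a Bregman divergence `D_h` that is symmetric
along the sequence, the iterates defined by the alternating Bregman minimization
satisfy
`F_ρ(πᵏ⁺¹, wᵏ⁺¹) - F_ρ(πᵏ, wᵏ) ≤ -ρ D_h(πᵏ, πᵏ⁺¹) - ρ D_h(wᵏ, wᵏ⁺¹)`,
where `F_ρ(π, w) = f(π, w) + ρ D_h(π, w)` on the feasible iterates
(the indicator terms vanish since `πᵏ ∈ C₁` and `wᵏ ∈ C₂`). -/
theorem bapg_sufficient_decrease
    {E : Type*} [NormedAddCommGroup E] [InnerProductSpace ℝ E] [FiniteDimensional ℝ E]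
    (C₁ C₂ : Set E) (hC₁ : Convex ℝ C₁) (hC₂ : Convex ℝ C₂)
    (hC₁cl : IsClosed C₁) (hC₂cl : IsClosed C₂)
    (B : E →ₗ[ℝ] E →ₗ[ℝ] ℝ)
    (h : E → ℝ) (h' : E → E)
    (hconv : ConvexOn ℝ Set.univ h)
    (hdiff : ∀ x, HasGradientAt h (h' x) x)
    (Dh : E → E → ℝ)
    (hDh : ∀ x y, Dh x y = h x - h y - ⟪h' y, x - y⟫)
    (ρ : ℝ) (hρ : 0 < ρ)
    (π w : ℕ → E) (k : ℕ)
    (hπmem : ∀ j, π j ∈ C₁) (hwmem : ∀ j, w j ∈ C₂)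
    (hsym : ∀ i j, Dh (π i) (w j) = Dh (w j) (π i))
    (hπopt : ∀ z ∈ C₁,
      B (π (k + 1)) (w k) + ρ * Dh (π (k + 1)) (w k) ≤ B z (w k) + ρ * Dh z (w k))
    (hwopt : ∀ z ∈ C₂,
      B (π (k + 1)) (w (k + 1)) + ρ * Dh (w (k + 1)) (π (k + 1))
        ≤ B (π (k + 1)) z + ρ * Dh z (π (k + 1))) :
    (B (π (k + 1)) (w (k + 1)) + ρ * Dh (π (k + 1)) (w (k + 1)))
        - (B (π k) (w k) + ρ * Dh (π k) (w k))
      ≤ -(ρ * Dh (π k) (π (k + 1))) - ρ * Dh (w k) (w (k + 1)) := by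
  have ineq1 := bregman_prox_ineq hC₁ (B.flip (w k)) h h' hdiff Dh hDh hρ
    (hπmem (k + 1)) (hπmem k) (fun u hu => hπopt u hu)
  have ineq2 := bregman_prox_ineq hC₂ (B (π (k + 1))) h h' hdiff Dh hDh hρ
    (hwmem (k + 1)) (hwmem k) (fun u hu => hwopt u hu)
  have s1 := hsym (k + 1) (k + 1)
  have s2 := hsym (k + 1) k
  simp only [LinearMap.flip_apply] at ineq1
  have s1' : ρ * Dh (π (k + 1)) (w (k + 1)) = ρ * Dh (w (k + 1)) (π (k + 1)) := by rw [s1]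
  have s2' : ρ * Dh (π (k + 1)) (w k) = ρ * Dh (w k) (π (k + 1)) := by rw [s2]
  linarith
end

section
/- Infeasibility bound for BAPG fixed points: Suppose (π*, w*) with π* ∈ C₁, w* ∈ C₂ satisfies ∇f(w*) + ρ(∇h(π*) - ∇h(w*)) + p = 0 and ∇f(π*) + ρ(∇h(w*) - ∇h(π*)) + q = 0 with p ∈ N_{C₁}(π*), q ∈ N_{C₂}(w*). Assume h is σ-strongly convex, ||∇f|| ≤ L_f on the relevant bounded region, and the bounded linear regularity holds: dist(π, C₁∩C₂) ≤ κ ||π - w|| whenever π ∈ C₁, w ∈ C₂ and specifically dist(π*, C₁∩C₂) ≤ κ ||π* - w*||. Then ||π* - w*|| ≤ (2κ+1) L_f / (σ ρ). -/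
open scoped RealInnerProductSpace

lemma strong_mono_bapg {E : Type*} [NormedAddCommGroup E] [InnerProductSpace ℝ E] [CompleteSpace E]
    (h : E → ℝ) (h' : E → E) (hhgrad : ∀ x, HasGradientAt h (h' x) x)
    (σ : ℝ)
    (hsc : ConvexOn ℝ Set.univ (fun x => h x - σ / 2 * ‖x‖ ^ 2))
    (x v : E) : σ * ‖v‖ ^ 2 ≤ ⟪h' (x + v) - h' x, v⟫ := by
  set φ : E → ℝ := fun x => h x - σ / 2 * ‖x‖ ^ 2 with hφ
  set m : ℝ →ᵃ[ℝ] E := AffineMap.lineMap x (x + v) with hm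
  have hmt : ∀ t : ℝ, m t = x + t • v := by
    intro t; simp [hm, AffineMap.lineMap_apply]; abel
  have hg : ConvexOn ℝ Set.univ (φ ∘ m) := by
    have := hsc.comp_affineMap m
    simpa using this
  -- derivative of φ ∘ m at t
  have hd : ∀ t : ℝ, HasDerivAt (φ ∘ m)
      (⟪h' (x + t • v), v⟫ - σ / 2 * (2 * ⟪x, v⟫ + 2 * t * ‖v‖ ^ 2)) t := by
    intro t
    have hline : HasDerivAt (fun s : ℝ => x + s • v) v t := by
      simpa using ((hasDerivAt_id t).smul_const v).const_add x
    have h1 : HasDerivAt (fun s : ℝ => h (x + s • v)) ⟪h' (x + t • v), v⟫ t := by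
      have hf := (hhgrad (x + t • v)).hasFDerivAt
      have := hf.comp_hasDerivAt t hline
      simp at this; exact this
    have h2 : HasDerivAt (fun s : ℝ => σ / 2 * ‖x + s • v‖ ^ 2)
        (σ / 2 * (2 * ⟪x, v⟫ + 2 * t * ‖v‖ ^ 2)) t := by
      have hsq : ∀ s : ℝ, ‖x + s • v‖ ^ 2 = ‖x‖ ^ 2 + 2 * s * ⟪x, v⟫ + s ^ 2 * ‖v‖ ^ 2 := by
        intro s
        rw [norm_add_sq_real, real_inner_smul_right, norm_smul]
        simp [mul_pow]
        ring
      have hpoly : HasDerivAt (fun s : ℝ => ‖x‖ ^ 2 + 2 * s * ⟪x, v⟫ + s ^ 2 * ‖v‖ ^ 2)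
          (2 * ⟪x, v⟫ + 2 * t * ‖v‖ ^ 2) t := by
        have := (((hasDerivAt_id t).const_mul 2).mul_const ⟪x, v⟫).const_add (‖x‖ ^ 2)
        have h2' := (hasDerivAt_pow 2 t).mul_const (‖v‖ ^ 2)
        have := this.add h2'
        exact this.congr_deriv (by norm_num)
      have : HasDerivAt (fun s : ℝ => ‖x + s • v‖ ^ 2) (2 * ⟪x, v⟫ + 2 * t * ‖v‖ ^ 2) t := by
        simpa only [hsq] using hpoly
      simpa using this.const_mul (σ / 2)
    have := h1.sub h2
    refine this.congr_of_eventuallyEq (Filter.Eventually.of_forall fun s => ?_)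
    simp [φ, hmt]
  have h01 : (0 : ℝ) < 1 := one_pos
  have hle1 := hg.le_slope_of_hasDerivAt (Set.mem_univ 0) (Set.mem_univ 1) h01 (hd 0)
  have hle2 := hg.slope_le_of_hasDerivAt (Set.mem_univ 0) (Set.mem_univ 1) h01 (hd 1)
  have := hle1.trans hle2
  simp only [zero_smul, add_zero, one_smul] at this
  have hinner : ⟪h' (x + v) - h' x, v⟫ = ⟪h' (x + v), v⟫ - ⟪h' x, v⟫ := inner_sub_left _ _ _
  nlinarith [this]

/-- Infeasibility bound for BAPG fixed points: if `(π*, w*)` satisfies the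
fixed-point equations with normal-cone elements `p ∈ N_{C₁}(π*)`, `q ∈ N_{C₂}(w*)`,
`h` is σ-strongly convex, `‖∇f(π*)‖, ‖∇f(w*)‖ ≤ L_f`, and the bounded linear
regularity `dist(π*, C₁ ∩ C₂) ≤ κ ‖π* - w*‖` holds, then
`‖π* - w*‖ ≤ (2κ + 1) L_f / (σ ρ)`. -/
theorem bapg_infeasibility_bound
    {E : Type*} [NormedAddCommGroup E] [InnerProductSpace ℝ E] [FiniteDimensional ℝ E]
    (C₁ C₂ : Set E) (hC₁ : Convex ℝ C₁) (hC₂ : Convex ℝ C₂)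
    (hC₁cl : IsClosed C₁) (hC₂cl : IsClosed C₂)
    (hne : (C₁ ∩ C₂).Nonempty) (hbdd : Bornology.IsBounded (C₁ ∩ C₂))
    (f h : E → ℝ) (f' h' : E → E)
    (hfgrad : ∀ x, HasGradientAt f (f' x) x)
    (hhgrad : ∀ x, HasGradientAt h (h' x) x)
    (σ ρ κ Lf : ℝ) (hσ : 0 < σ) (hρ : 0 < ρ) (hκ : 0 ≤ κ)
    (hsc : ConvexOn ℝ Set.univ (fun x => h x - σ / 2 * ‖x‖ ^ 2))
    (πs ws : E) (hπs : πs ∈ C₁) (hws : ws ∈ C₂)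
    (hLf1 : ‖f' πs‖ ≤ Lf) (hLf2 : ‖f' ws‖ ≤ Lf)
    (hblr : Metric.infDist πs (C₁ ∩ C₂) ≤ κ * ‖πs - ws‖)
    (p q : E)
    (hp : ∀ y ∈ C₁, ⟪p, y - πs⟫ ≤ 0)
    (hq : ∀ y ∈ C₂, ⟪q, y - ws⟫ ≤ 0)
    (heq1 : f' ws + ρ • (h' πs - h' ws) + p = 0)
    (heq2 : f' πs + ρ • (h' ws - h' πs) + q = 0) :
    ‖πs - ws‖ ≤ (2 * κ + 1) * Lf / (σ * ρ) := by
  have hLf0 : 0 ≤ Lf := le_trans (norm_nonneg _) hLf1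
  -- find nearest point z in C₁ ∩ C₂
  have hcpt : IsCompact (C₁ ∩ C₂) :=
    Metric.isCompact_of_isClosed_isBounded (hC₁cl.inter hC₂cl) hbdd
  obtain ⟨z, hz, hzd⟩ := hcpt.exists_infDist_eq_dist hne πs
  have hz1 : z ∈ C₁ := hz.1
  have hz2 : z ∈ C₂ := hz.2
  set v := πs - ws with hv
  have hz_near : ‖πs - z‖ ≤ κ * ‖v‖ := by
    rw [← dist_eq_norm]; rw [hzd] at hblr; exact hblr
  have hz_near2 : ‖ws - z‖ ≤ (κ + 1) * ‖v‖ := by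
    have : ws - z = (πs - z) - v := by rw [hv]; abel
    calc ‖ws - z‖ = ‖(πs - z) - v‖ := by rw [this]
      _ ≤ ‖πs - z‖ + ‖v‖ := norm_sub_le _ _
      _ ≤ κ * ‖v‖ + ‖v‖ := by linarith
      _ = (κ + 1) * ‖v‖ := by ring
  -- strong convexity monotonicity
  have hmono : σ * ‖v‖ ^ 2 ≤ ⟪h' πs - h' ws, v⟫ := by
    have := strong_mono_bapg h h' hhgrad σ hsc ws v
    simpa [hv] using this
  -- normal cone inequalities
  have hp' : ⟪f' ws + ρ • (h' πs - h' ws), z - πs⟫ ≥ 0 := by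
    have hpz := hp z hz1
    have hpe : p = -(f' ws + ρ • (h' πs - h' ws)) := by
      have := heq1; linear_combination (norm := module) this
    rw [hpe, inner_neg_left] at hpz
    linarith
  have hq' : ⟪f' πs + ρ • (h' ws - h' πs), z - ws⟫ ≥ 0 := by
    have hqz := hq z hz2
    have hqe : q = -(f' πs + ρ • (h' ws - h' πs)) := by
      linear_combination (norm := module) heq2
    rw [hqe, inner_neg_left] at hqz
    linarith
  -- combine
  have hkey : ρ * ⟪h' πs - h' ws, v⟫ ≤ ⟪f' ws, z - πs⟫ + ⟪f' πs, z - ws⟫ := by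
    have e1 : ⟪f' ws + ρ • (h' πs - h' ws), z - πs⟫
        = ⟪f' ws, z - πs⟫ + ρ * ⟪h' πs - h' ws, z - πs⟫ := by
      rw [inner_add_left, real_inner_smul_left]
    have e2 : ⟪f' πs + ρ • (h' ws - h' πs), z - ws⟫
        = ⟪f' πs, z - ws⟫ + ρ * ⟪h' ws - h' πs, z - ws⟫ := by
      rw [inner_add_left, real_inner_smul_left]
    have e3 : ⟪h' πs - h' ws, v⟫
        = ⟪h' πs - h' ws, z - ws⟫ - ⟪h' πs - h' ws, z - πs⟫ := by
      rw [← inner_sub_right]; congr 1; rw [hv]; abel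
    have e4 : ⟪h' ws - h' πs, z - ws⟫ = - ⟪h' πs - h' ws, z - ws⟫ := by
      rw [← inner_neg_left]; congr 1; abel
    rw [e1] at hp'; rw [e2, e4] at hq'
    rw [e3, mul_sub]
    linarith
  have hcs1 : ⟪f' ws, z - πs⟫ ≤ Lf * (κ * ‖v‖) := by
    calc ⟪f' ws, z - πs⟫ ≤ ‖f' ws‖ * ‖z - πs‖ := real_inner_le_norm _ _
      _ ≤ Lf * (κ * ‖v‖) := by
          have : ‖z - πs‖ = ‖πs - z‖ := norm_sub_rev _ _
          rw [this]
          exact mul_le_mul hLf2 hz_near (norm_nonneg _) hLf0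
  have hcs2 : ⟪f' πs, z - ws⟫ ≤ Lf * ((κ + 1) * ‖v‖) := by
    calc ⟪f' πs, z - ws⟫ ≤ ‖f' πs‖ * ‖z - ws‖ := real_inner_le_norm _ _
      _ ≤ Lf * ((κ + 1) * ‖v‖) := by
          have : ‖z - ws‖ = ‖ws - z‖ := norm_sub_rev _ _
          rw [this]
          exact mul_le_mul hLf1 hz_near2 (norm_nonneg _) hLf0
  have hfinal : σ * ρ * ‖v‖ ^ 2 ≤ (2 * κ + 1) * Lf * ‖v‖ := by
    nlinarith [hmono, hkey, hcs1, hcs2]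
  rw [le_div_iff₀ (by positivity)]
  rcases eq_or_lt_of_le (norm_nonneg v) with h0 | h0
  · rw [← h0]; nlinarith [mul_nonneg (by linarith : (0:ℝ) ≤ 2 * κ + 1) hLf0]
  · have := mul_le_mul_of_nonneg_left hfinal (le_of_lt h0)
    rw [← sub_nonneg]
    have hv2 : ‖v‖ ^ 2 = ‖v‖ * ‖v‖ := sq ‖v‖
    nlinarith
end
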